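/- Let α be a unit-speed curve with τ ≠ 0 and κ' ≠ 0 everywhere, radius of curvature r = 1/κ. Then α is contained in a sphere of radius R if and only if r² + r'²/τ² = R² (constant); moreover this condition implies the identity r''τ - r'τ' + rτ³ = 0. -/

import Mathlib

open Real

noncomputable section

/-- Euclidean dot product on ℝ³. -/
def dot3 (a b : Fin 3 → ℝ) : ℝ := a 0 * b 0 + a 1 * b 1 + a 2 * b 2

/-- Cross product on ℝ³. -/
def cross3 (a b : Fin 3 → ℝ) : Fin 3 → ℝ :=
  ![a 1 * b 2 - a 2 * b 1, a 2 * b 0 - a 0 * b 2, a 0 * b 1 - a 1 * b 0]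

/-- Euclidean norm on ℝ³. -/
def norm3 (a : Fin 3 → ℝ) : ℝ := Real.sqrt (dot3 a a)

/-- Scalar triple product: determinant of the three vectors. -/
def det3 (a b c : Fin 3 → ℝ) : ℝ := dot3 a (cross3 b c)

lemma dot3_comm (a b : Fin 3 → ℝ) : dot3 a b = dot3 b a := by simp [dot3]; ring

lemma dot3_smul_left (c : ℝ) (a b : Fin 3 → ℝ) : dot3 (c • a) b = c * dot3 a b := by
  simp [dot3]; ring

lemma dot3_add_left (a a' b : Fin 3 → ℝ) : dot3 (a + a') b = dot3 a b + dot3 a' b := by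
  simp [dot3]; ring

lemma dot3_neg_left (a b : Fin 3 → ℝ) : dot3 (-a) b = -dot3 a b := by
  simp [dot3]; ring

lemma cross3_apply0 (a b : Fin 3 → ℝ) : cross3 a b 0 = a 1 * b 2 - a 2 * b 1 := rfl
lemma cross3_apply1 (a b : Fin 3 → ℝ) : cross3 a b 1 = a 2 * b 0 - a 0 * b 2 := rfl
lemma cross3_apply2 (a b : Fin 3 → ℝ) : cross3 a b 2 = a 0 * b 1 - a 1 * b 0 := rfl

lemma dot3_cross_right (a b : Fin 3 → ℝ) : dot3 b (cross3 a b) = 0 := by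
  simp [dot3, cross3_apply0, cross3_apply1, cross3_apply2]; ring

lemma dot3_cross_self (a b : Fin 3 → ℝ) :
    dot3 (cross3 a b) (cross3 a b) = dot3 a a * dot3 b b - dot3 a b ^ 2 := by
  simp [dot3, cross3_apply0, cross3_apply1, cross3_apply2]; ring

lemma dot3_expand (p q : ℝ) (x y : Fin 3 → ℝ) :
    dot3 (-(p • x + q • y)) (-(p • x + q • y)) =
      p ^ 2 * dot3 x x + 2 * p * q * dot3 x y + q ^ 2 * dot3 y y := by
  simp [dot3]; ring

lemma expand3 (a b v : Fin 3 → ℝ) (ha : dot3 a a = 1) (hb : dot3 b b = 1)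
    (hab : dot3 a b = 0) :
    dot3 v v = dot3 a v ^ 2 + dot3 b v ^ 2 + dot3 (cross3 a b) v ^ 2 := by
  simp only [dot3, cross3_apply0, cross3_apply1, cross3_apply2] at *
  linear_combination
    ((b 0 * v 0 + b 1 * v 1 + b 2 * v 2) ^ 2
      - (v 0 * v 0 + v 1 * v 1 + v 2 * v 2) * (b 0 * b 0 + b 1 * b 1 + b 2 * b 2)) * ha
    + ((a 0 * v 0 + a 1 * v 1 + a 2 * v 2) ^ 2
      - (v 0 * v 0 + v 1 * v 1 + v 2 * v 2)) * hb
    + ((v 0 * v 0 + v 1 * v 1 + v 2 * v 2) * (a 0 * b 0 + a 1 * b 1 + a 2 * b 2)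
      - 2 * (a 0 * v 0 + a 1 * v 1 + a 2 * v 2) * (b 0 * v 0 + b 1 * v 1 + b 2 * v 2)) * hab

lemma hasDerivAt_dot3 {u v : ℝ → Fin 3 → ℝ} {u' v' : Fin 3 → ℝ} {s : ℝ}
    (hu : HasDerivAt u u' s) (hv : HasDerivAt v v' s) :
    HasDerivAt (fun t => dot3 (u t) (v t)) (dot3 u' (v s) + dot3 (u s) v') s := by
  have hu' := hasDerivAt_pi.mp hu
  have hv' := hasDerivAt_pi.mp hv
  have h := (((hu' 0).mul (hv' 0)).add ((hu' 1).mul (hv' 1))).add ((hu' 2).mul (hv' 2))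
  refine h.congr_deriv ?_
  simp [dot3]; ring

/-- A unit-speed curve with `τ ≠ 0`, `κ' ≠ 0` lies in a sphere of
radius `R` iff `r² + r'²/τ² = R²`; moreover this condition implies
`r''τ - r'τ' + rτ³ = 0`. -/
theorem stmt_13
    (α T N B : ℝ → Fin 3 → ℝ) (κ τ r r' : ℝ → ℝ)
    (hκ : ∀ s, 0 < κ s)
    (hr : ∀ s, r s = (κ s)⁻¹)
    -- Frenet frame and Frenet equations
    (hTT : ∀ s, dot3 (T s) (T s) = 1)
    (hNN : ∀ s, dot3 (N s) (N s) = 1)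
    (hTN : ∀ s, dot3 (T s) (N s) = 0)
    (hB : ∀ s, B s = cross3 (T s) (N s))
    (hα : ∀ s, HasDerivAt α (T s) s)
    (hT : ∀ s, HasDerivAt T (κ s • N s) s)
    (hN : ∀ s, HasDerivAt N ((-κ s) • T s + τ s • B s) s)
    (hB' : ∀ s, HasDerivAt B ((-τ s) • N s) s)
    (hr' : ∀ s, HasDerivAt r (r' s) s)
    -- the surface of osculating circles and its partial derivatives
    (X Xs Xu : ℝ → ℝ → Fin 3 → ℝ)
    (hX : ∀ s u, X s u = α s + r s • (Real.sin u • T s + (1 - Real.cos u) • N s))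
    (hXs : ∀ s u, HasDerivAt (fun t => X t u) (Xs s u) s)
    (hXu : ∀ s u, HasDerivAt (fun w => X s w) (Xu s u) u)
    (τ' r'' : ℝ → ℝ)
    (hτ' : ∀ s, HasDerivAt τ (τ' s) s)
    (hr'' : ∀ s, HasDerivAt r' (r'' s) s)
    (κ' : ℝ → ℝ)
    (hκ' : ∀ s, HasDerivAt κ (κ' s) s)
    (hκ'0 : ∀ s, κ' s ≠ 0)
    (hτ0 : ∀ s, τ s ≠ 0)
    (R : ℝ) :
    ((∃ c : Fin 3 → ℝ, ∀ s, dot3 (α s - c) (α s - c) = R ^ 2) ↔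
      ∀ s, (r s) ^ 2 + (r' s) ^ 2 / (τ s) ^ 2 = R ^ 2)
    ∧ ((∀ s, (r s) ^ 2 + (r' s) ^ 2 / (τ s) ^ 2 = R ^ 2) →
        ∀ s, r'' s * τ s - r' s * τ' s + r s * (τ s) ^ 3 = 0) := by
  have hrfun : r = fun s => (κ s)⁻¹ := funext hr
  have hr'_eq : ∀ s, r' s = -κ' s / κ s ^ 2 := by
    intro s
    have h2 : HasDerivAt r (-κ' s / κ s ^ 2) s := by
      rw [hrfun]; exact (hκ' s).inv (hκ s).ne'
    exact (hr' s).unique h2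
  have hr'0 : ∀ s, r' s ≠ 0 := by
    intro s
    rw [hr'_eq s]
    exact div_ne_zero (neg_ne_zero.mpr (hκ'0 s)) (pow_ne_zero 2 (hκ s).ne')
  -- Part 3
  have part3 : (∀ s, (r s) ^ 2 + (r' s) ^ 2 / (τ s) ^ 2 = R ^ 2) →
      ∀ s, r'' s * τ s - r' s * τ' s + r s * (τ s) ^ 3 = 0 := by
    intro hsph s
    have hτ2 : (τ s) ^ 2 ≠ 0 := pow_ne_zero 2 (hτ0 s)
    have hF := ((hr' s).pow 2).add (((hr'' s).pow 2).div ((hτ' s).pow 2) hτ2)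
    have hF0 : HasDerivAt (fun t => (r t) ^ 2 + (r' t) ^ 2 / (τ t) ^ 2) 0 s := by
      have heq : (fun t => (r t) ^ 2 + (r' t) ^ 2 / (τ t) ^ 2) = fun _ => R ^ 2 :=
        funext hsph
      rw [heq]; exact hasDerivAt_const s _
    have hE := hF.unique hF0
    norm_num at hE
    field_simp at hE
    have key : (2 * r' s * τ s) * (r'' s * τ s - r' s * τ' s + r s * τ s ^ 3) = 0 := by
      have h3 : (r'' s * τ s - r' s * τ' s) / τ s ^ 3 * τ s ^ 3 = r'' s * τ s - r' s * τ' s :=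
        div_mul_cancel₀ _ (pow_ne_zero 3 (hτ0 s))
      linear_combination τ s ^ 4 * hE - 2 * r' s * τ s * h3
    rcases mul_eq_zero.mp key with h | h
    · exact absurd h (mul_ne_zero (mul_ne_zero two_ne_zero (hr'0 s)) (hτ0 s))
    · exact h
  refine ⟨⟨?_, ?_⟩, part3⟩
  · -- forward: sphere → identity
    rintro ⟨c, hc⟩ s
    have hf : ∀ t, HasDerivAt (fun w => α w - c) (T t) t := fun t => (hα t).sub_const c
    have h1 : ∀ t, dot3 (T t) (α t - c) = 0 := by
      intro t
      have hd := hasDerivAt_dot3 (hf t) (hf t)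
      have hd0 : HasDerivAt (fun w => dot3 (α w - c) (α w - c)) 0 t := by
        have heq : (fun w => dot3 (α w - c) (α w - c)) = fun _ => R ^ 2 := funext hc
        rw [heq]; exact hasDerivAt_const t _
      have he := hd.unique hd0
      rw [dot3_comm (α t - c) (T t)] at he
      linarith
    have h2 : ∀ t, dot3 (N t) (α t - c) = -r t := by
      intro t
      have hd := hasDerivAt_dot3 (hT t) (hf t)
      have hd0 : HasDerivAt (fun w => dot3 (T w) (α w - c)) 0 t := by
        have heq : (fun w => dot3 (T w) (α w - c)) = fun _ => 0 := funext h1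
        rw [heq]; exact hasDerivAt_const t _
      have he := hd.unique hd0
      rw [dot3_smul_left, hTT t] at he
      have hκt : κ t ≠ 0 := (hκ t).ne'
      rw [hr t]
      field_simp
      linear_combination he
    have h3 : ∀ t, dot3 (B t) (α t - c) = -r' t / τ t := by
      intro t
      have hd := (hasDerivAt_dot3 (hN t) (hf t)).add (hr' t)
      have hd0 : HasDerivAt (fun w => dot3 (N w) (α w - c) + r w) 0 t := by
        have heq : (fun w => dot3 (N w) (α w - c) + r w) = fun _ => 0 := by
          funext w; rw [h2 w]; ring
        rw [heq]; exact hasDerivAt_const t _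
      have he := hd.unique hd0
      rw [dot3_add_left, dot3_smul_left, dot3_smul_left, h1 t,
        dot3_comm (N t) (T t), hTN t] at he
      have hτt := hτ0 t
      field_simp
      linear_combination he
    have hexp := expand3 (T s) (N s) (α s - c) (hTT s) (hNN s) (hTN s)
    rw [← hB s, hc s, h1 s, h2 s, h3 s] at hexp
    rw [hexp]
    have := hτ0 s
    field_simp
    ring
  · -- backward: identity → sphere
    intro hsph
    have hkey := part3 hsph
    have hq' : ∀ s, HasDerivAt (fun t => r' t / τ t) (-(r s * τ s)) s := by
      intro s
      have h1 : HasDerivAt (fun t => r' t / τ t)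
          ((r'' s * τ s - r' s * τ' s) / τ s ^ 2) s := (hr'' s).div (hτ' s) (hτ0 s)
      convert h1 using 1
      have h := hkey s
      have hτ2 : (τ s) ^ 2 ≠ 0 := pow_ne_zero 2 (hτ0 s)
      rw [eq_div_iff hτ2]
      linear_combination -(h)
    set c : ℝ → Fin 3 → ℝ :=
      fun s => α s + r s • N s + (r' s / τ s) • B s with hcdef
    have hc' : ∀ s, HasDerivAt c 0 s := by
      intro s
      have h := ((hα s).add ((hr' s).smul (hN s))).add ((hq' s).smul (hB' s))
      refine h.congr_deriv ?_
      funext i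
      have hκs : κ s ≠ 0 := (hκ s).ne'
      have hτs := hτ0 s
      simp only [Pi.add_apply, Pi.smul_apply, Pi.zero_apply, smul_eq_mul, Pi.neg_apply]
      rw [hr s]
      field_simp
      ring
    have hconst : ∀ s, c s = c 0 := fun s =>
      is_const_of_deriv_eq_zero (fun t => (hc' t).differentiableAt)
        (fun t => (hc' t).deriv) s 0
    refine ⟨c 0, fun s => ?_⟩
    have hαc : α s - c 0 = -(r s • N s + (r' s / τ s) • B s) := by
      rw [← hconst s, hcdef]
      beta_reduce
      abel
    have hBB : dot3 (B s) (B s) = 1 := by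
      rw [hB s, dot3_cross_self, hTT s, hNN s, hTN s]; ring
    have hNB : dot3 (N s) (B s) = 0 := by
      rw [hB s]; exact dot3_cross_right (T s) (N s)
    rw [hαc, dot3_expand, hNN s, hNB, hBB]
    have h := hsph s
    have hτs := hτ0 s
    field_simp at h ⊢
    linear_combination h
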